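/- For every matroid complex Σ on a finite set I and every linear order w on I, the ordered complex (w, BC_w(Σ)), where BC_w(Σ) is the broken-circuit complex, is order-decomposable. -/

import Mathlib

namespace OrderedComplexes

variable {α : Type*} [DecidableEq α]

/-- A (downward closed) simplicial complex, as a finite set of faces. -/
def IsComplex (S : Finset (Finset α)) : Prop := ∀ σ ∈ S, ∀ τ ⊆ σ, τ ∈ S

/-- `σ` is a facet (maximal face) of the complex `S`. -/
def IsFacet (S : Finset (Finset α)) (σ : Finset α) : Prop :=
  σ ∈ S ∧ ∀ τ ∈ S, σ ⊆ τ → σ = τ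

/-- A complex is pure if all of its facets have the same cardinality. -/
def IsPure (S : Finset (Finset α)) : Prop :=
  ∀ σ τ, IsFacet S σ → IsFacet S τ → σ.card = τ.card

/-- The restriction `Σ|T = {σ ∈ Σ : σ ⊆ T}`. -/
def restrictC (S : Finset (Finset α)) (T : Finset α) : Finset (Finset α) :=
  S.filter (· ⊆ T)

/-- The link of `τ` in `Σ`: `{ρ ∈ Σ : ρ ∩ τ = ∅ and ρ ∪ τ ∈ Σ}`. -/
def linkC (S : Finset (Finset α)) (τ : Finset α) : Finset (Finset α) :=
  S.filter fun ρ => Disjoint ρ τ ∧ ρ ∪ τ ∈ S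

/-- The lexicographically smallest (with respect to the linear order `w`, encoded as a
duplicate-free list) facet of the complex `S`, computed greedily along `w`. -/
def lexMinFacet (w : List α) (S : Finset (Finset α)) : Finset α :=
  w.foldl (fun τ a => if insert a τ ∈ S then insert a τ else τ) ∅

/-- The contraction `Σ/A`: the link in `Σ` of the lexicographically smallest facet of the
restriction `Σ|A`. -/
def contractC (w : List α) (S : Finset (Finset α)) (A : Finset α) : Finset (Finset α) :=
  linkC S (lexMinFacet w (restrictC S A))

/-- An ordered complex: a linear order `w` on a finite ground set (a duplicate-free list)
together with a simplicial complex whose faces are subsets of the ground set. -/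
def IsOrderedComplex (w : List α) (S : Finset (Finset α)) : Prop :=
  w.Nodup ∧ (∀ σ ∈ S, σ ⊆ w.toFinset) ∧ IsComplex S

/-- The join of two complexes: `{σ₁ ∪ σ₂ : σ₁ ∈ Σ₁, σ₂ ∈ Σ₂}`. -/
def joinC (S₁ S₂ : Finset (Finset α)) : Finset (Finset α) :=
  (S₁ ×ˢ S₂).image fun p => p.1 ∪ p.2

/-- `w` is a shuffle of the linear orders `w₁` and `w₂`: a linear order on the union of the
two ground sets restricting to `wᵢ` on each. -/
def IsShuffle (w₁ w₂ w : List α) : Prop :=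
  w.Nodup ∧ w.toFinset = w₁.toFinset ∪ w₂.toFinset ∧
    w.filter (fun a => decide (a ∈ w₁.toFinset)) = w₁ ∧
    w.filter (fun a => decide (a ∈ w₂.toFinset)) = w₂

/-- A Hopf class: a class of pure ordered complexes closed under shuffled joins, and under
restriction and contraction by initial segments (with all such restrictions pure).
Here the initial segment of `w` of length `k` is `(w.take k).toFinset`, the order induced on
it is `w.take k`, and the order induced on its complement is `w.drop k`. -/
def IsHopfClass (Q : Set (List α × Finset (Finset α))) : Prop :=
  (∀ p ∈ Q, IsOrderedComplex p.1 p.2 ∧ IsPure p.2) ∧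
  (∀ p₁ ∈ Q, ∀ p₂ ∈ Q, Disjoint p₁.1.toFinset p₂.1.toFinset →
    ∀ w, IsShuffle p₁.1 p₂.1 w → (w, joinC p₁.2 p₂.2) ∈ Q) ∧
  (∀ p ∈ Q, ∀ k : ℕ,
    IsPure (restrictC p.2 (p.1.take k).toFinset) ∧
    (p.1.take k, restrictC p.2 (p.1.take k).toFinset) ∈ Q) ∧
  (∀ p ∈ Q, ∀ k : ℕ,
    (p.1.drop k, contractC p.1 p.2 (p.1.take k).toFinset) ∈ Q)

/-- Order-decomposability: either `Σ` has exactly one facet, or `Σ` is pure and for every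
nonempty proper initial segment `A` of `w` both `Σ|A` and `Σ/A` are pure and (with their
induced orders) order-decomposable. -/
inductive OrderDecomposable : List α → Finset (Finset α) → Prop
  | unique (w : List α) (S : Finset (Finset α)) (σ : Finset α)
      (hσ : IsFacet S σ) (huniq : ∀ τ, IsFacet S τ → τ = σ) :
      OrderDecomposable w S
  | pure (w : List α) (S : Finset (Finset α)) (hpure : IsPure S)
      (hres_pure : ∀ k : ℕ, 0 < k → k < w.length →
        IsPure (restrictC S (w.take k).toFinset))
      (hcon_pure : ∀ k : ℕ, 0 < k → k < w.length →
        IsPure (contractC w S (w.take k).toFinset))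
      (hres : ∀ k : ℕ, 0 < k → k < w.length →
        OrderDecomposable (w.take k) (restrictC S (w.take k).toFinset))
      (hcon : ∀ k : ℕ, 0 < k → k < w.length →
        OrderDecomposable (w.drop k) (contractC w S (w.take k).toFinset)) :
      OrderDecomposable w S


/-- A matroid complex on `I`: a nonempty simplicial complex on `I` all of whose
restrictions are pure. -/
def IsMatroidComplex (I : Finset α) (S : Finset (Finset α)) : Prop :=
  S.Nonempty ∧ (∀ σ ∈ S, σ ⊆ I) ∧ (∀ σ ∈ S, ∀ τ ⊆ σ, τ ∈ S) ∧
    ∀ T ⊆ I, IsPure (restrictC S T)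

/-- A circuit of the matroid complex `S` on `I`: an inclusion-minimal subset of `I` that is
not a face. -/
def IsCircuit (I : Finset α) (S : Finset (Finset α)) (C : Finset α) : Prop :=
  C ⊆ I ∧ C ∉ S ∧ ∀ D ⊂ C, D ∈ S

/-- A broken circuit with respect to the linear order `w`: a circuit with its `w`-smallest
element removed. -/
def IsBrokenCircuit (w : List α) (I : Finset α) (S : Finset (Finset α))
    (B : Finset α) : Prop :=
  ∃ C a, IsCircuit I S C ∧ a ∈ C ∧ (∀ b ∈ C, w.idxOf a ≤ w.idxOf b) ∧ B = C.erase a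

/-- The broken-circuit complex `BC_w(Σ)`: all subsets of `I` containing no broken
circuit. -/
noncomputable def bcComplex (w : List α) (I : Finset α) (S : Finset (Finset α)) :
    Finset (Finset α) :=
  @Finset.filter _ (fun σ => ∀ B ⊆ σ, ¬ IsBrokenCircuit w I S B)
    (Classical.decPred _) I.powerset

lemma mem_restrictC {S : Finset (Finset α)} {T σ : Finset α} :
    σ ∈ restrictC S T ↔ σ ∈ S ∧ σ ⊆ T := Finset.mem_filter


lemma restrictC_restrictC {S : Finset (Finset α)} {A B : Finset α} (h : A ⊆ B) :
    restrictC (restrictC S B) A = restrictC S A := by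
  ext σ
  simp only [mem_restrictC]
  exact ⟨fun ⟨⟨h1, _⟩, h3⟩ => ⟨h1, h3⟩, fun ⟨h1, h2⟩ => ⟨⟨h1, h2.trans h⟩, h2⟩⟩


lemma restrictC_self {S : Finset (Finset α)} {I : Finset α} (h : ∀ σ ∈ S, σ ⊆ I) :
    restrictC S I = S := by
  ext σ; simp only [mem_restrictC]
  exact ⟨fun h1 => h1.1, fun h1 => ⟨h1, h σ h1⟩⟩


lemma empty_mem {I : Finset α} {M : Finset (Finset α)} (hS : IsMatroidComplex I M) :
    (∅ : Finset α) ∈ M := by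
  obtain ⟨σ, hσ⟩ := hS.1
  exact hS.2.2.1 σ hσ ∅ (Finset.empty_subset σ)


lemma exists_facet_superset {S : Finset (Finset α)} {σ : Finset α} (hσ : σ ∈ S) :
    ∃ F, IsFacet S F ∧ σ ⊆ F := by
  obtain ⟨m, hm, hmax⟩ := (S.filter (σ ⊆ ·)).exists_maximal
    ⟨σ, Finset.mem_filter.2 ⟨hσ, subset_rfl⟩⟩
  rw [Finset.mem_filter] at hm
  refine ⟨m, ⟨hm.1, fun τ hτ hsub => ?_⟩, hm.2⟩
  by_contra hne
  exact
    hsub |> fun h => hne (le_antisymm h (hmax (Finset.mem_filter.2 ⟨hτ, hm.2.trans hsub⟩) h))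


lemma exists_circuit {I : Finset α} {M : Finset (Finset α)} (hS : IsMatroidComplex I M)
    {X : Finset α} (hXI : X ⊆ I) (hX : X ∉ M) : ∃ C ⊆ X, IsCircuit I M C := by
  obtain ⟨C, hC, hmin⟩ := (X.powerset.filter (· ∉ M)).exists_minimal
    ⟨X, Finset.mem_filter.2 ⟨Finset.mem_powerset.2 subset_rfl, hX⟩⟩
  rw [Finset.mem_filter, Finset.mem_powerset] at hC
  refine ⟨C, hC.1, (hC.1.trans hXI), hC.2, fun D hD => ?_⟩
  by_contra hDM
  exact hD.2 (hmin (Finset.mem_filter.2 ⟨Finset.mem_powerset.2 (hD.subset.trans hC.1), hDM⟩) hD.subset)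



lemma lemL {I : Finset α} {M : Finset (Finset α)} (hS : IsMatroidComplex I M)
    {V C : Finset α} {a c : α}
    (hV : V ∈ M) (ha : a ∉ V) (hc : c ∉ V) (hac : a ≠ c) (haI : a ∈ I) (hcI : c ∈ I)
    (hC : IsCircuit I M C) (haC : a ∈ C) (hcC : c ∈ C)
    (hCsub : C ⊆ insert a (insert c V)) (hdep : insert c V ∉ M) :
    insert a V ∉ M := by
  intro hind
  have hVI : V ⊆ I := hS.2.1 _ hV
  set T0 : Finset α := insert c V with hT0
  set T1 : Finset α := insert a T0 with hT1
  -- C.erase a is independent and sits inside T0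
  have hCa : C.erase a ∈ M := hC.2.2 _ (Finset.erase_ssubset haC)
  have hCaT0 : C.erase a ⊆ T0 := by
    intro x hx
    have hx1 := Finset.mem_of_mem_erase hx
    have hx2 := Finset.ne_of_mem_erase hx
    have := hCsub hx1
    rcases Finset.mem_insert.1 this with h | h
    · exact absurd h hx2
    · exact h
  obtain ⟨G, hGfacet, hGsub⟩ := exists_facet_superset
    (mem_restrictC.2 ⟨hCa, hCaT0⟩ : C.erase a ∈ restrictC M T0)
  have hGM : G ∈ M := (mem_restrictC.1 hGfacet.1).1
  have hGT0 : G ⊆ T0 := (mem_restrictC.1 hGfacet.1).2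
  have hcG : c ∈ G := hGsub (Finset.mem_erase.2 ⟨fun h => hac h.symm, hcC⟩)
  -- G is a facet of the restriction to T1
  have hG1 : IsFacet (restrictC M T1) G := by
    refine ⟨mem_restrictC.2 ⟨hGM, hGT0.trans (Finset.subset_insert _ _)⟩, ?_⟩
    intro ρ hρ hsub
    obtain ⟨hρM, hρT1⟩ := mem_restrictC.1 hρ
    by_cases haρ : a ∈ ρ
    · exfalso
      have hCρ : C ⊆ ρ := by
        intro x hx
        by_cases hxa : x = a
        · exact hxa ▸ haρ
        · exact hsub (hGsub (Finset.mem_erase.2 ⟨hxa, hx⟩))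
      exact hC.2.1 (hS.2.2.1 ρ hρM C hCρ)
    · have hρT0 : ρ ⊆ T0 := by
        intro x hx
        rcases Finset.mem_insert.1 (hρT1 hx) with h | h
        · exact absurd (h ▸ hx) haρ
        · exact h
      exact hGfacet.2 ρ (mem_restrictC.2 ⟨hρM, hρT0⟩) hsub
  -- insert a V is a facet of the restriction to T1
  have haV1 : IsFacet (restrictC M T1) (insert a V) := by
    refine ⟨mem_restrictC.2 ⟨hind, Finset.insert_subset_insert a (Finset.subset_insert _ _)⟩, ?_⟩
    intro ρ hρ hsub
    obtain ⟨hρM, hρT1⟩ := mem_restrictC.1 hρ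
    by_contra hne
    obtain ⟨x, hxρ, hxn⟩ := Finset.exists_of_ssubset (lt_of_le_of_ne hsub hne)
    have hxc : x = c := by
      rcases Finset.mem_insert.1 (hρT1 hxρ) with h | h
      · exact absurd (Finset.mem_insert.2 (Or.inl h)) hxn
      · rcases Finset.mem_insert.1 h with h2 | h2
        · exact h2
        · exact absurd (Finset.mem_insert.2 (Or.inr h2)) hxn
    have hCρ : C ⊆ ρ := by
      intro y hy
      rcases Finset.mem_insert.1 (hCsub hy) with h | h
      · exact hsub (h ▸ Finset.mem_insert_self a V)
      · rcases Finset.mem_insert.1 h with h2 | h2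
        · exact h2 ▸ hxc ▸ hxρ
        · exact hsub (Finset.mem_insert.2 (Or.inr h2))
    exact hC.2.1 (hS.2.2.1 ρ hρM C hCρ)
  have hT1I : T1 ⊆ I := Finset.insert_subset haI (Finset.insert_subset hcI hVI)
  have hcard := hS.2.2.2 T1 hT1I G (insert a V) hG1 haV1
  have hGne : G ≠ T0 := fun h => hdep (h ▸ hGM)
  have h1 : G.card < T0.card := Finset.card_lt_card (lt_of_le_of_ne hGT0 hGne)
  have h2 : T0.card = V.card + 1 := Finset.card_insert_of_notMem hc
  have h3 : (insert a V).card = V.card + 1 := Finset.card_insert_of_notMem ha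
  omega


noncomputable def NBC (w : List α) (M : Finset (Finset α)) : Finset (Finset α) :=
  M.filter (fun σ => ∀ c ∈ w.toFinset, c ∉ σ → {c} ∈ M →
      insert c (σ.filter (fun x => w.idxOf c < w.idxOf x)) ∈ M)


lemma mem_NBC {w : List α} {M : Finset (Finset α)} {σ : Finset α} :
    σ ∈ NBC w M ↔ σ ∈ M ∧ ∀ c ∈ w.toFinset, c ∉ σ → {c} ∈ M →
      insert c (σ.filter (fun x => w.idxOf c < w.idxOf x)) ∈ M := by
  exact Finset.mem_filter


lemma NBC_subset {w : List α} {M : Finset (Finset α)} : NBC w M ⊆ M :=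
  Finset.filter_subset _ _


lemma NBC_down {I : Finset α} {w : List α} {M : Finset (Finset α)}
    (hS : IsMatroidComplex I M) {σ ρ : Finset α} (hσ : σ ∈ NBC w M) (hρ : ρ ⊆ σ) :
    ρ ∈ NBC w M := by
  rw [mem_NBC] at hσ ⊢
  refine ⟨hS.2.2.1 σ hσ.1 ρ hρ, fun c hc hcρ hcM => ?_⟩
  by_cases hcσ : c ∈ σ
  · refine hS.2.2.1 σ hσ.1 _ ?_
    exact Finset.insert_subset hcσ ((Finset.filter_subset _ _).trans hρ)
  · refine hS.2.2.1 _ (hσ.2 c hc hcσ hcM) _ ?_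
    exact Finset.insert_subset_insert c (Finset.filter_subset_filter _ hρ)


lemma empty_mem_NBC {I : Finset α} {w : List α} {M : Finset (Finset α)}
    (hS : IsMatroidComplex I M) : (∅ : Finset α) ∈ NBC w M := by
  rw [mem_NBC]
  refine ⟨empty_mem hS, fun c hc _ hcM => ?_⟩
  simpa using hcM


lemma indexOf_inj' {w : List α} (hw : w.Nodup) {a b : α} (ha : a ∈ w) (hb : b ∈ w)
    (h : w.idxOf a = w.idxOf b) : a = b := by
  have h1 : w.get ⟨w.idxOf a, List.idxOf_lt_length_iff.2 ha⟩ = a := List.idxOf_get _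
  have h2 : w.get ⟨w.idxOf b, List.idxOf_lt_length_iff.2 hb⟩ = b := List.idxOf_get _
  rw [← h1, ← h2]
  congr 1
  exact Fin.ext h


lemma step_lemma {w : List α} {M : Finset (Finset α)} (hw : w.Nodup)
    (hS : IsMatroidComplex w.toFinset M)
    {T : Finset α} {a : α} (hT : T ∈ NBC w M) (haI : a ∈ w.toFinset) (haT : a ∉ T)
    (hadd : insert a T ∈ M)
    (hmin : ∀ c ∈ w.toFinset, c ∉ T → insert c T ∈ M → w.idxOf a ≤ w.idxOf c) :
    insert a T ∈ NBC w M := by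
  rw [mem_NBC]
  refine ⟨hadd, fun c hcI hcT hcM => ?_⟩
  have hcT' : c ∉ T := fun h => hcT (Finset.mem_insert_of_mem h)
  have hca' : c ≠ a := fun h => hcT (h ▸ Finset.mem_insert_self a T)
  by_cases hca : w.idxOf c < w.idxOf a
  · rw [Finset.filter_insert, if_pos hca]
    by_contra hX
    have hTI : T ⊆ w.toFinset := hS.2.1 T (NBC_subset hT)
    have hXI : insert c (insert a (T.filter (fun x => w.idxOf c < w.idxOf x)))
        ⊆ w.toFinset :=
      Finset.insert_subset hcI (Finset.insert_subset haI
        ((Finset.filter_subset _ _).trans hTI))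
    obtain ⟨C, hCX, hC⟩ := exists_circuit hS hXI hX
    have haC : a ∈ C := by
      by_contra haC
      refine hC.2.1 (hS.2.2.1 _ ((mem_NBC.1 hT).2 c hcI hcT' hcM) C ?_)
      intro x hx
      rcases Finset.mem_insert.1 (hCX hx) with h | h
      · exact h ▸ Finset.mem_insert_self _ _
      · rcases Finset.mem_insert.1 h with h2 | h2
        · exact absurd (h2 ▸ hx) haC
        · exact Finset.mem_insert_of_mem h2
    have hcC : c ∈ C := by
      by_contra hcC
      refine hC.2.1 (hS.2.2.1 _ hadd C ?_)
      intro x hx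
      rcases Finset.mem_insert.1 (hCX hx) with h | h
      · exact absurd (h ▸ hx) hcC
      · rcases Finset.mem_insert.1 h with h2 | h2
        · exact h2 ▸ Finset.mem_insert_self _ _
        · exact Finset.mem_insert_of_mem (Finset.filter_subset _ _ h2)
    have hcTM : insert c T ∉ M := fun h => absurd (hmin c hcI hcT' h) (not_le.2 hca)
    have hCsub : C ⊆ insert a (insert c T) := by
      intro x hx
      rcases Finset.mem_insert.1 (hCX hx) with h | h
      · exact Finset.mem_insert_of_mem (h ▸ Finset.mem_insert_self _ _)
      · rcases Finset.mem_insert.1 h with h2 | h2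
        · exact h2 ▸ Finset.mem_insert_self _ _
        · exact Finset.mem_insert_of_mem
            (Finset.mem_insert_of_mem (Finset.filter_subset _ _ h2))
    exact lemL hS (NBC_subset hT) haT hcT' (fun h => hca' h.symm) haI hcI hC haC hcC
      hCsub hcTM hadd
  · have : ¬ (w.idxOf c < w.idxOf a) := hca
    rw [Finset.filter_insert, if_neg this]
    exact (mem_NBC.1 hT).2 c hcI hcT' hcM



lemma hmin_of_split {w : List α} {M : Finset (Finset α)} (hw : w.Nodup)
    {l₁ l₂ : List α} {a : α} (hsplit : w = l₁ ++ a :: l₂)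
    {cur : Finset α} (hcur : cur ⊆ l₁.toFinset)
    (hrej : ∀ x ∈ l₁.toFinset, x ∉ cur → insert x cur ∉ M) :
    ∀ c ∈ w.toFinset, c ∉ cur → insert c cur ∈ M → w.idxOf a ≤ w.idxOf c := by
  intro c hc hc2 hc3
  by_cases hcl : c ∈ l₁
  · exact absurd hc3 (hrej c (List.mem_toFinset.2 hcl) hc2)
  · have hal : a ∉ l₁ := by
      subst hsplit
      have := (List.nodup_append.1 hw).2.2
      exact fun h => this a h a List.mem_cons_self rfl
    have hcw : c ∈ l₁ ++ a :: l₂ := by rw [← hsplit]; exact List.mem_toFinset.1 hc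
    subst hsplit
    rw [List.idxOf_append_of_notMem hal, List.idxOf_append_of_notMem hcl,
      List.idxOf_cons_self]
    omega


def gext (M : Finset (Finset α)) (l : List α) (t : Finset α) : Finset α :=
  l.foldl (fun τ a => if insert a τ ∈ M then insert a τ else τ) t


lemma gext_append {M : Finset (Finset α)} {l₁ l₂ : List α} {t : Finset α} :
    gext M (l₁ ++ l₂) t = gext M l₂ (gext M l₁ t) := List.foldl_append ..


lemma subset_gext {M : Finset (Finset α)} : ∀ (l : List α) (t : Finset α), t ⊆ gext M l t := by
  intro l
  induction l with
  | nil => intro t; exact subset_rfl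
  | cons a l IH =>
    intro t
    show t ⊆ gext M l _
    by_cases h : insert a t ∈ M
    · simp only [gext, List.foldl_cons, if_pos h] at *
      exact (Finset.subset_insert a t).trans (IH (insert a t))
    · simp only [gext, List.foldl_cons, if_neg h] at *
      exact IH t


lemma gext_subset {M : Finset (Finset α)} : ∀ (l : List α) (t : Finset α),
    gext M l t ⊆ t ∪ l.toFinset := by
  intro l
  induction l with
  | nil => intro t; simp [gext]
  | cons a l IH =>
    intro t
    by_cases h : insert a t ∈ M
    · show gext M l _ ⊆ _
      simp only [if_pos h]
      refine (IH (insert a t)).trans ?_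
      intro x hx
      simp only [Finset.mem_union, Finset.mem_insert, List.toFinset_cons] at hx ⊢
      tauto
    · show gext M l _ ⊆ _
      simp only [if_neg h]
      refine (IH t).trans ?_
      intro x hx
      simp only [Finset.mem_union, Finset.mem_insert, List.toFinset_cons] at hx ⊢
      tauto


lemma FLC {w : List α} {M : Finset (Finset α)} (hw : w.Nodup)
    (hS : IsMatroidComplex w.toFinset M) :
    ∀ (l₂ l₁ l₃ : List α) (cur : Finset α),
    w = l₁ ++ (l₂ ++ l₃) → cur ∈ NBC w M → cur ⊆ l₁.toFinset →
    (∀ x ∈ l₁.toFinset, x ∉ cur → insert x cur ∉ M) →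
    gext M l₂ cur ∈ NBC w M ∧ cur ⊆ gext M l₂ cur ∧
      gext M l₂ cur ⊆ l₁.toFinset ∪ l₂.toFinset ∧
      (∀ x ∈ l₁.toFinset ∪ l₂.toFinset, x ∉ gext M l₂ cur → insert x (gext M l₂ cur) ∉ M) := by
  intro l₂
  induction l₂ with
  | nil =>
    intro l₁ l₃ cur hsplit h1 h2 h3
    refine ⟨h1, subset_rfl, ?_, ?_⟩
    · simpa [gext] using h2
    · simpa [gext] using h3
  | cons a t IH =>
    intro l₁ l₃ cur hsplit h1 h2 h3
    have hsplit' : w = (l₁ ++ [a]) ++ (t ++ l₃) := by rw [hsplit]; simp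
    have hsplitA : w = l₁ ++ a :: (t ++ l₃) := by rw [hsplit]; simp
    have hal₁ : a ∉ l₁ := by
      have hw' := hsplitA ▸ hw
      have := (List.nodup_append.1 hw').2.2
      exact fun h => this a h a List.mem_cons_self rfl
    have haw : a ∈ w.toFinset := by
      rw [hsplitA]
      simp
    have hacur : a ∉ cur := fun h => hal₁ (List.mem_toFinset.1 (h2 h))
    have hTF : (l₁ ++ [a]).toFinset ∪ t.toFinset = l₁.toFinset ∪ (a :: t).toFinset := by
      ext x
      simp only [List.toFinset_append, List.toFinset_cons, Finset.mem_union,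
        Finset.mem_insert, List.toFinset_nil, List.mem_toFinset, Finset.mem_singleton,
        Finset.union_comm, Finset.notMem_empty]
      tauto
    by_cases hacc : insert a cur ∈ M
    · have hnbc : insert a cur ∈ NBC w M :=
        step_lemma hw hS h1 haw hacur hacc (hmin_of_split hw hsplitA h2 h3)
      have h2' : insert a cur ⊆ (l₁ ++ [a]).toFinset := by
        intro x hx
        rcases Finset.mem_insert.1 hx with h | h
        · subst h; simp
        · simp only [List.toFinset_append, Finset.mem_union]
          exact Or.inl (h2 h)
      have h3' : ∀ x ∈ (l₁ ++ [a]).toFinset, x ∉ insert a cur →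
          insert x (insert a cur) ∉ M := by
        intro x hx hx2 hmem
        have hx' : x ∈ l₁ ∨ x = a := by
          simpa [List.toFinset_append, or_comm] using hx
        rcases hx' with h | h
        · exact h3 x (List.mem_toFinset.2 h) (fun hc => hx2 (Finset.mem_insert_of_mem hc))
            (hS.2.2.1 _ hmem _ (Finset.insert_subset_insert x (Finset.subset_insert a cur)))
        · exact hx2 (h ▸ Finset.mem_insert_self a cur)
      obtain ⟨c1, c2, c3, c4⟩ := IH (l₁ ++ [a]) l₃ (insert a cur) hsplit' hnbc h2' h3'
      have hg : gext M (a :: t) cur = gext M t (insert a cur) := by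
        simp only [gext, List.foldl_cons, if_pos hacc]
      rw [hg]
      exact ⟨c1, (Finset.subset_insert a cur).trans c2, c3.trans hTF.le,
        fun x hx => c4 x (hTF ▸ hx)⟩
    · have h2' : cur ⊆ (l₁ ++ [a]).toFinset := by
        refine h2.trans ?_
        simp only [List.toFinset_append]
        exact Finset.subset_union_left
      have h3' : ∀ x ∈ (l₁ ++ [a]).toFinset, x ∉ cur → insert x cur ∉ M := by
        intro x hx hx2
        have hx' : x ∈ l₁ ∨ x = a := by
          simpa [List.toFinset_append, or_comm] using hx
        rcases hx' with h | h
        · exact h3 x (List.mem_toFinset.2 h) hx2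
        · exact h ▸ hacc
      obtain ⟨c1, c2, c3, c4⟩ := IH (l₁ ++ [a]) l₃ cur hsplit' h1 h2' h3'
      have hg : gext M (a :: t) cur = gext M t cur := by
        simp only [gext, List.foldl_cons, if_neg hacc]
      rw [hg]
      exact ⟨c1, c2, c3.trans hTF.le, fun x hx => c4 x (hTF ▸ hx)⟩



lemma take_toFinset_subset {w : List α} {p : ℕ} : (w.take p).toFinset ⊆ w.toFinset := by
  intro x hx
  exact List.mem_toFinset.2 (List.mem_of_mem_take (List.mem_toFinset.1 hx))


lemma NBC_restrict {w : List α} {M : Finset (Finset α)} (hw : w.Nodup)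
    (hS : IsMatroidComplex w.toFinset M)
    (p : ℕ) {σ : Finset α} (hσ : σ ⊆ (w.take p).toFinset) :
    σ ∈ NBC w M ↔ σ ∈ NBC (w.take p) (restrictC M (w.take p).toFinset) := by
  have hsplit : w = w.take p ++ w.drop p := (List.take_append_drop p w).symm
  have hidx : ∀ c ∈ (w.take p).toFinset, w.idxOf c = (w.take p).idxOf c := by
    intro c hc
    conv_lhs => rw [hsplit]
    exact List.idxOf_append_of_mem (List.mem_toFinset.1 hc)
  have hfil : ∀ c ∈ (w.take p).toFinset,
      σ.filter (fun x => w.idxOf c < w.idxOf x) =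
      σ.filter (fun x => (w.take p).idxOf c < (w.take p).idxOf x) := by
    intro c hc
    apply Finset.filter_congr
    intro x hx
    rw [hidx c hc, hidx x (hσ hx)]
  constructor
  · intro h
    rw [mem_NBC] at h ⊢
    refine ⟨mem_restrictC.2 ⟨h.1, hσ⟩, fun c hc hcσ hcM => ?_⟩
    have hcw : c ∈ w.toFinset := take_toFinset_subset hc
    have h2 := h.2 c hcw hcσ ((mem_restrictC.1 hcM).1)
    rw [hfil c hc] at h2
    exact mem_restrictC.2 ⟨h2,
      Finset.insert_subset hc ((Finset.filter_subset _ _).trans hσ)⟩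
  · intro h
    rw [mem_NBC] at h ⊢
    refine ⟨(mem_restrictC.1 h.1).1, fun c hc hcσ hcM => ?_⟩
    by_cases hcp : c ∈ (w.take p).toFinset
    · have h2 := h.2 c hcp hcσ
        (mem_restrictC.2 ⟨hcM, Finset.singleton_subset_iff.2 hcp⟩)
      have h3 := (mem_restrictC.1 h2).1
      rwa [← hfil c hcp] at h3
    · have hfe : σ.filter (fun x => w.idxOf c < w.idxOf x) = ∅ := by
        rw [Finset.filter_eq_empty_iff]
        intro x hx
        have hxtake : x ∈ w.take p := List.mem_toFinset.1 (hσ hx)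
        have hcnt : c ∉ w.take p := fun hh => hcp (List.mem_toFinset.2 hh)
        have e1 : w.idxOf x < (w.take p).length := by
          conv_lhs => rw [hsplit]
          rw [List.idxOf_append_of_mem hxtake]
          exact List.idxOf_lt_length_iff.2 hxtake
        have e2 : (w.take p).length ≤ w.idxOf c := by
          conv_rhs => rw [hsplit]
          rw [List.idxOf_append_of_notMem hcnt]
          omega
        omega
      rw [hfe]
      simpa using hcM


def bset (w : List α) (M : Finset (Finset α)) (j : ℕ) : Finset α :=
  gext M (w.take j) ∅


lemma bset_spec {w : List α} {M : Finset (Finset α)} (hw : w.Nodup)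
    (hS : IsMatroidComplex w.toFinset M) (j : ℕ) :
    bset w M j ∈ NBC w M ∧ bset w M j ⊆ (w.take j).toFinset ∧
      (∀ x ∈ (w.take j).toFinset, x ∉ bset w M j → insert x (bset w M j) ∉ M) := by
  have := FLC hw hS (w.take j) [] (w.drop j) ∅ (by simp) (empty_mem_NBC hS)
    (by simp) (by simp)
  obtain ⟨c1, _, c3, c4⟩ := this
  refine ⟨c1, ?_, ?_⟩
  · refine c3.trans ?_
    simp
  · intro x hx
    refine c4 x ?_
    simp only [List.toFinset_nil, Finset.empty_union]
    exact hx


noncomputable def Dset (w : List α) (M : Finset (Finset α)) (j : ℕ) : Finset (Finset α) :=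
  ((w.drop j).toFinset.powerset).filter (fun σ => σ ∪ bset w M j ∈ NBC w M)


lemma mem_Dset {w : List α} {M : Finset (Finset α)} {j : ℕ} {σ : Finset α} :
    σ ∈ Dset w M j ↔ σ ⊆ (w.drop j).toFinset ∧ σ ∪ bset w M j ∈ NBC w M := by
  unfold Dset
  rw [Finset.mem_filter, Finset.mem_powerset]


lemma take_drop_disjoint {w : List α} (hw : w.Nodup) {j : ℕ} {x : α}
    (h1 : x ∈ (w.take j).toFinset) (h2 : x ∈ (w.drop j).toFinset) : False := by
  have hsplit : w = w.take j ++ w.drop j := (List.take_append_drop j w).symm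
  have hw' := hsplit ▸ hw
  exact (List.nodup_append.1 hw').2.2 _ (List.mem_toFinset.1 h1) _ (List.mem_toFinset.1 h2) rfl



lemma isPure_M {w : List α} {M : Finset (Finset α)} (hS : IsMatroidComplex w.toFinset M) :
    IsPure M := by
  have := hS.2.2.2 w.toFinset subset_rfl
  rwa [restrictC_self hS.2.1] at this


lemma facet_Dset_basis {w : List α} {M : Finset (Finset α)} (hw : w.Nodup)
    (hS : IsMatroidComplex w.toFinset M) (j : ℕ) {σ : Finset α}
    (hσ : IsFacet (Dset w M j) σ) :
    ∀ y, insert y (σ ∪ bset w M j) ∈ M → y ∈ σ ∪ bset w M j := by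
  intro y hy
  by_contra hyn
  have hσD := mem_Dset.1 hσ.1
  have hb := bset_spec hw hS j
  set T := σ ∪ bset w M j with hT
  set Y := w.toFinset.filter (fun z => z ∉ T ∧ insert z T ∈ M) with hY
  have hyY : y ∈ Y := by
    rw [hY, Finset.mem_filter]
    exact ⟨hS.2.1 _ hy (Finset.mem_insert_self y T), hyn, hy⟩
  obtain ⟨a, haY, hamin⟩ := Y.exists_min_image w.idxOf ⟨y, hyY⟩
  rw [hY, Finset.mem_filter] at haY
  obtain ⟨haI, haT, hacc⟩ := haY
  have hadrop : a ∈ (w.drop j).toFinset := by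
    have hsplit : w = w.take j ++ w.drop j := (List.take_append_drop j w).symm
    have : a ∈ w.take j ∨ a ∈ w.drop j := by
      rw [← List.mem_append, ← hsplit]
      exact List.mem_toFinset.1 haI
    rcases this with h | h
    · exfalso
      have habs : a ∉ bset w M j := fun hc => haT (Finset.mem_union_right _ hc)
      refine hb.2.2 a (List.mem_toFinset.2 h) habs ?_
      exact hS.2.2.1 _ hacc _
        (Finset.insert_subset_insert a Finset.subset_union_right)
    · exact List.mem_toFinset.2 h
  have hmin : ∀ c ∈ w.toFinset, c ∉ T → insert c T ∈ M → w.idxOf a ≤ w.idxOf c :=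
    fun c h1 h2 h3 => hamin c (by rw [hY, Finset.mem_filter]; exact ⟨h1, h2, h3⟩)
  have hstep := step_lemma hw hS hσD.2 haI haT hacc hmin
  have hmem : insert a σ ∈ Dset w M j := by
    rw [mem_Dset]
    constructor
    · exact Finset.insert_subset hadrop hσD.1
    · rw [Finset.insert_union]
      exact hstep
  have heq := hσ.2 _ hmem (Finset.subset_insert a σ)
  have haσ : a ∉ σ := fun h => haT (Finset.mem_union_left _ h)
  exact haσ (heq ▸ Finset.mem_insert_self a σ)


lemma pure_Dset {w : List α} {M : Finset (Finset α)} (hw : w.Nodup)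
    (hS : IsMatroidComplex w.toFinset M) (j : ℕ) : IsPure (Dset w M j) := by
  intro σ ρ hσ hρ
  have hb := bset_spec hw hS j
  have key : ∀ {τ : Finset α}, IsFacet (Dset w M j) τ → IsFacet M (τ ∪ bset w M j) := by
    intro τ hτ
    refine ⟨NBC_subset (mem_Dset.1 hτ.1).2, fun ξ hξ hsub => ?_⟩
    by_contra hne
    obtain ⟨y, hyξ, hyn⟩ := Finset.exists_of_ssubset (lt_of_le_of_ne hsub hne)
    exact hyn (facet_Dset_basis hw hS j hτ y
      (hS.2.2.1 ξ hξ _ (Finset.insert_subset hyξ hsub)))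
  have h1 := isPure_M hS _ _ (key hσ) (key hρ)
  have d1 : Disjoint σ (bset w M j) := Finset.disjoint_left.2
    (fun {x} hx hx2 => take_drop_disjoint hw (hb.2.1 hx2) ((mem_Dset.1 hσ.1).1 hx))
  have d2 : Disjoint ρ (bset w M j) := Finset.disjoint_left.2
    (fun {x} hx hx2 => take_drop_disjoint hw (hb.2.1 hx2) ((mem_Dset.1 hρ.1).1 hx))
  have c1 := Finset.card_union_of_disjoint d1
  have c2 := Finset.card_union_of_disjoint d2
  omega



lemma restrict_matroid {w : List α} {M : Finset (Finset α)}
    (hS : IsMatroidComplex w.toFinset M) (p : ℕ) :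
    IsMatroidComplex (w.take p).toFinset (restrictC M (w.take p).toFinset) := by
  refine ⟨⟨∅, mem_restrictC.2 ⟨empty_mem hS, Finset.empty_subset _⟩⟩,
    fun σ h => (mem_restrictC.1 h).2,
    fun σ h τ hτ => mem_restrictC.2
      ⟨hS.2.2.1 σ (mem_restrictC.1 h).1 τ hτ, hτ.trans (mem_restrictC.1 h).2⟩,
    fun T hT => ?_⟩
  rw [restrictC_restrictC hT]
  exact hS.2.2.2 T (hT.trans take_toFinset_subset)


lemma gext_restrict {M : Finset (Finset α)} {P : Finset α} :
    ∀ (l : List α) (t : Finset α), t ⊆ P → (∀ a ∈ l, a ∈ P) →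
    gext (restrictC M P) l t = gext M l t := by
  intro l
  induction l with
  | nil => intros; rfl
  | cons a l IH =>
    intro t ht hl
    have hiff : (insert a t ∈ restrictC M P) ↔ insert a t ∈ M :=
      ⟨fun h => (mem_restrictC.1 h).1, fun h => mem_restrictC.2
        ⟨h, Finset.insert_subset (hl a (List.mem_cons_self)) ht⟩⟩
    by_cases h : insert a t ∈ M
    · show gext (restrictC M P) l (if insert a t ∈ restrictC M P then insert a t else t)
        = gext M l (if insert a t ∈ M then insert a t else t)
      rw [if_pos (hiff.2 h), if_pos h]
      exact IH (insert a t) (Finset.insert_subset (hl a (List.mem_cons_self)) ht)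
        (fun b hb => hl b (List.mem_cons_of_mem a hb))
    · show gext (restrictC M P) l (if insert a t ∈ restrictC M P then insert a t else t)
        = gext M l (if insert a t ∈ M then insert a t else t)
      rw [if_neg (fun hc => h (hiff.1 hc)), if_neg h]
      exact IH t ht (fun b hb => hl b (List.mem_cons_of_mem a hb))


lemma take_add_split (w : List α) (j k : ℕ) :
    w.take (j+k) = w.take j ++ (w.drop j).take k := by
  conv_lhs => rw [← List.take_append_drop j (w.take (j+k))]
  rw [List.take_take, min_eq_left (Nat.le_add_right j k), List.drop_take,
    Nat.add_sub_cancel_left]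


lemma bset_add {w : List α} {M : Finset (Finset α)} (j k : ℕ) :
    bset w M (j+k) = gext M ((w.drop j).take k) (bset w M j) := by
  unfold bset
  rw [← gext_append, ← take_add_split]


lemma drop_split (w : List α) (j k : ℕ) :
    w.drop j = (w.drop j).take k ++ w.drop (j+k) := by
  conv_lhs => rw [← List.take_append_drop k (w.drop j)]
  rw [List.drop_drop]


lemma restrict_Dset {w : List α} {M : Finset (Finset α)} (hw : w.Nodup)
    (hS : IsMatroidComplex w.toFinset M) (j k : ℕ) :
    restrictC (Dset w M j) ((w.drop j).take k).toFinset
      = Dset (w.take (j+k)) (restrictC M (w.take (j+k)).toFinset) j := by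
  set P := (w.take (j+k)).toFinset with hP
  have hsegP : ∀ x ∈ ((w.drop j).take k), x ∈ w.take (j+k) := by
    intro x hx; rw [take_add_split w j k]; exact List.mem_append.2 (Or.inr hx)
  have htakeP : ∀ x ∈ w.take j, x ∈ w.take (j+k) := by
    intro x hx; rw [take_add_split w j k]; exact List.mem_append.2 (Or.inl hx)
  have hb' : bset (w.take (j+k)) (restrictC M P) j = bset w M j := by
    unfold bset
    rw [List.take_take, min_eq_left (Nat.le_add_right j k)]
    exact gext_restrict (w.take j) ∅ (Finset.empty_subset _)
      (fun a ha => List.mem_toFinset.2 (htakeP a ha))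
  have hdropeq : ((w.take (j+k)).drop j) = (w.drop j).take k := by
    rw [List.drop_take, Nat.add_sub_cancel_left]
  have hbP : bset w M j ⊆ P := by
    intro x hx
    exact List.mem_toFinset.2 (htakeP x (List.mem_toFinset.1 ((bset_spec hw hS j).2.1 hx)))
  ext σ
  rw [mem_restrictC, mem_Dset, mem_Dset, hb', hdropeq]
  constructor
  · rintro ⟨⟨hσdrop, hσnbc⟩, hσA⟩
    have hsub : σ ∪ bset w M j ⊆ P := Finset.union_subset
      (fun x hx => List.mem_toFinset.2 (hsegP x (List.mem_toFinset.1 (hσA hx)))) hbP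
    exact ⟨hσA, (NBC_restrict hw hS (j+k) hsub).1 hσnbc⟩
  · rintro ⟨hσA, hnbc⟩
    have hsub : σ ∪ bset w M j ⊆ P := Finset.union_subset
      (fun x hx => List.mem_toFinset.2 (hsegP x (List.mem_toFinset.1 (hσA hx)))) hbP
    refine ⟨⟨?_, (NBC_restrict hw hS (j+k) hsub).2 hnbc⟩, hσA⟩
    intro x hx
    exact List.mem_toFinset.2
      (List.mem_of_mem_take (List.mem_toFinset.1 (hσA hx)))



lemma fold_const {S : Finset (Finset α)} : ∀ (l : List α) (R : Finset α),
    (∀ x ∈ l, x ∉ R → insert x R ∉ S) →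
    l.foldl (fun τ a => if insert a τ ∈ S then insert a τ else τ) R = R := by
  intro l
  induction l with
  | nil => intros; rfl
  | cons a t IH =>
    intro R h
    have hstep : (if insert a R ∈ S then insert a R else R) = R := by
      by_cases haR : a ∈ R
      · rw [Finset.insert_eq_self.2 haR]; split <;> rfl
      · rw [if_neg (h a (List.mem_cons_self) haR)]
    show t.foldl _ (if insert a R ∈ S then insert a R else R) = R
    rw [hstep]
    exact IH R (fun x hx => h x (List.mem_cons_of_mem a hx))


lemma fold2core {w : List α} {M : Finset (Finset α)} (hw : w.Nodup)
    (hS : IsMatroidComplex w.toFinset M) (j k : ℕ) :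
    ∀ (l₂ l₀ : List α) (cur : Finset α),
    (w.drop j).take k = l₀ ++ l₂ →
    w = (w.take j ++ l₀) ++ (l₂ ++ w.drop (j+k)) →
    cur ∈ NBC w M → bset w M j ⊆ cur → cur ⊆ (w.take j ++ l₀).toFinset →
    cur \ bset w M j ⊆ l₀.toFinset →
    (∀ x ∈ (w.take j ++ l₀).toFinset, x ∉ cur → insert x cur ∉ M) →
    l₂.foldl (fun τ a =>
        if insert a τ ∈ restrictC (Dset w M j) ((w.drop j).take k).toFinset
        then insert a τ else τ) (cur \ bset w M j)
      = gext M l₂ cur \ bset w M j := by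
  intro l₂
  induction l₂ with
  | nil => intros; rfl
  | cons a t IH =>
    intro l₀ cur hseg hsplit hnbc hbc hcur hcurb hrej
    have hsplitA : w = (w.take j ++ l₀) ++ a :: (t ++ w.drop (j+k)) := by
      conv_lhs => rw [hsplit]
      simp
    have hal₁ : a ∉ w.take j ++ l₀ := by
      have hw' := hsplitA ▸ hw
      have := (List.nodup_append.1 hw').2.2
      exact fun h => this a h a List.mem_cons_self rfl
    have haw : a ∈ w.toFinset := by
      conv_lhs => rw [hsplitA]
      simp
    have hacur : a ∉ cur := fun h => hal₁ (List.mem_toFinset.1 (hcur h))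
    have hab : a ∉ bset w M j := fun h => hacur (hbc h)
    have hmin := hmin_of_split hw hsplitA hcur hrej
    have haseg : a ∈ (w.drop j).take k := by
      rw [hseg]; exact List.mem_append.2 (Or.inr (List.mem_cons_self))
    have hadrop : a ∈ (w.drop j).toFinset :=
      List.mem_toFinset.2 (List.mem_of_mem_take haseg)
    have hsegsub : ∀ x ∈ l₀.toFinset, x ∈ ((w.drop j).take k).toFinset := by
      intro x hx
      rw [List.mem_toFinset] at hx ⊢
      rw [hseg]
      exact List.mem_append.2 (Or.inl hx)
    have hu : insert a (cur \ bset w M j) ∪ bset w M j = insert a cur := by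
      rw [Finset.insert_union, Finset.sdiff_union_of_subset hbc]
    have hseg' : (w.drop j).take k = (l₀ ++ [a]) ++ t := by rw [hseg]; simp
    have hsplit' : w = (w.take j ++ (l₀ ++ [a])) ++ (t ++ w.drop (j+k)) := by
      conv_lhs => rw [hsplit]
      simp
    have hmemsplit : ∀ x, x ∈ (w.take j ++ (l₀ ++ [a])).toFinset →
        x ∈ (w.take j ++ l₀).toFinset ∨ x = a := by
      intro x hx
      rw [List.mem_toFinset, List.mem_append, List.mem_append] at hx
      rw [List.mem_toFinset, List.mem_append]
      simp only [List.mem_singleton] at hx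
      tauto
    have hmemsplit' : ∀ x, x ∈ (w.take j ++ l₀).toFinset ∨ x = a →
        x ∈ (w.take j ++ (l₀ ++ [a])).toFinset := by
      intro x hx
      rw [List.mem_toFinset, List.mem_append] at hx ⊢
      rw [List.mem_append]
      simp only [List.mem_singleton]
      tauto
    by_cases hacc : insert a cur ∈ M
    · have hnbc' : insert a cur ∈ NBC w M := step_lemma hw hS hnbc haw hacur hacc hmin
      have hDmem : insert a (cur \ bset w M j) ∈
          restrictC (Dset w M j) ((w.drop j).take k).toFinset := by
        rw [mem_restrictC, mem_Dset]
        refine ⟨⟨?_, by rw [hu]; exact hnbc'⟩, ?_⟩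
        · refine Finset.insert_subset hadrop ?_
          intro x hx
          have hx2 := hcurb hx
          exact List.mem_toFinset.2
            (List.mem_of_mem_take (List.mem_toFinset.1 (hsegsub x hx2)))
        · refine Finset.insert_subset (List.mem_toFinset.2 haseg) ?_
          exact fun x hx => hsegsub x (hcurb hx)
      have hds : insert a (cur \ bset w M j) = insert a cur \ bset w M j :=
        (Finset.insert_sdiff_of_notMem cur hab).symm
      have hcur' : insert a cur ⊆ (w.take j ++ (l₀ ++ [a])).toFinset := by
        intro x hx
        rcases Finset.mem_insert.1 hx with h | h
        · exact hmemsplit' x (Or.inr h)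
        · exact hmemsplit' x (Or.inl (hcur h))
      have hcurb' : insert a cur \ bset w M j ⊆ (l₀ ++ [a]).toFinset := by
        rw [← hds]
        intro x hx
        rw [List.mem_toFinset, List.mem_append]
        rcases Finset.mem_insert.1 hx with h | h
        · exact Or.inr (by simp [h])
        · exact Or.inl (List.mem_toFinset.1 (hcurb h))
      have hrej' : ∀ x ∈ (w.take j ++ (l₀ ++ [a])).toFinset, x ∉ insert a cur →
          insert x (insert a cur) ∉ M := by
        intro x hx hx2 hmem
        rcases hmemsplit x hx with h | h
        · exact hrej x h (fun hc => hx2 (Finset.mem_insert_of_mem hc))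
            (hS.2.2.1 _ hmem _ (Finset.insert_subset_insert x (Finset.subset_insert a cur)))
        · exact hx2 (h ▸ Finset.mem_insert_self a cur)
      have IH' := IH (l₀ ++ [a]) (insert a cur) hseg' hsplit' hnbc'
        (hbc.trans (Finset.subset_insert a cur)) hcur' hcurb' hrej'
      show t.foldl _ (if _ ∈ _ then _ else _) = gext M t
        (if insert a cur ∈ M then insert a cur else cur) \ bset w M j
      rw [if_pos hDmem, if_pos hacc, hds]
      exact IH'
    · have hDnot : insert a (cur \ bset w M j) ∉
          restrictC (Dset w M j) ((w.drop j).take k).toFinset := by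
        intro h
        have := (mem_Dset.1 (mem_restrictC.1 h).1).2
        rw [hu] at this
        exact hacc (NBC_subset this)
      have hcur' : cur ⊆ (w.take j ++ (l₀ ++ [a])).toFinset :=
        fun x hx => hmemsplit' x (Or.inl (hcur hx))
      have hcurb' : cur \ bset w M j ⊆ (l₀ ++ [a]).toFinset := by
        intro x hx
        rw [List.mem_toFinset, List.mem_append]
        exact Or.inl (List.mem_toFinset.1 (hcurb hx))
      have hrej' : ∀ x ∈ (w.take j ++ (l₀ ++ [a])).toFinset, x ∉ cur →
          insert x cur ∉ M := by
        intro x hx hx2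
        rcases hmemsplit x hx with h | h
        · exact hrej x h hx2
        · exact h ▸ hacc
      have IH' := IH (l₀ ++ [a]) cur hseg' hsplit' hnbc hbc hcur' hcurb' hrej'
      show t.foldl _ (if _ ∈ _ then _ else _) = gext M t
        (if insert a cur ∈ M then insert a cur else cur) \ bset w M j
      rw [if_neg hDnot, if_neg hacc]
      exact IH'



lemma fold2 {w : List α} {M : Finset (Finset α)} (hw : w.Nodup)
    (hS : IsMatroidComplex w.toFinset M) (j k : ℕ) :
    lexMinFacet (w.drop j) (restrictC (Dset w M j) ((w.drop j).take k).toFinset)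
      = bset w M (j+k) \ bset w M j := by
  have hb := bset_spec hw hS j
  unfold lexMinFacet
  set S : Finset (Finset α) := restrictC (Dset w M j) ((w.drop j).take k).toFinset with hs
  conv_lhs => rw [drop_split w j k]
  rw [List.foldl_append]
  have hsplit0 : w = (w.take j ++ []) ++ ((w.drop j).take k ++ w.drop (j+k)) := by
    rw [List.append_nil, ← drop_split w j k, List.take_append_drop]
  have hcore := fold2core hw hS j k ((w.drop j).take k) [] (bset w M j) rfl hsplit0
    hb.1 subset_rfl (by simpa using hb.2.1) (by simp) (by simpa using hb.2.2)
  rw [Finset.sdiff_self, ← hs] at hcore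
  rw [hcore]
  have hconst := fold_const (S := S) (w.drop (j+k))
    (gext M ((w.drop j).take k) (bset w M j) \ bset w M j) ?_
  · rw [hconst, bset_add]
  · intro x hx hxR hmem
    rw [hs] at hmem
    have hxA := (mem_restrictC.1 hmem).2 (Finset.mem_insert_self x _)
    have hdn : (w.drop j).Nodup := (List.drop_sublist ..).nodup hw
    have := (List.nodup_append.1 (drop_split w j k ▸ hdn)).2.2
    exact this _ (List.mem_toFinset.1 hxA) _ hx rfl


lemma contract_Dset {w : List α} {M : Finset (Finset α)} (hw : w.Nodup)
    (hS : IsMatroidComplex w.toFinset M) (j k : ℕ) :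
    contractC (w.drop j) (Dset w M j) ((w.drop j).take k).toFinset = Dset w M (j+k) := by
  unfold contractC
  rw [fold2 hw hS j k]
  have hb := bset_spec hw hS j
  have hb2 := bset_spec hw hS (j+k)
  have hbsub : bset w M j ⊆ bset w M (j+k) := by
    rw [bset_add]; exact subset_gext _ _
  have hτ₂u : (bset w M (j+k) \ bset w M j) ∪ bset w M j = bset w M (j+k) :=
    Finset.sdiff_union_of_subset hbsub
  have hτ₂seg : bset w M (j+k) \ bset w M j ⊆ ((w.drop j).take k).toFinset := by
    intro x hx
    obtain ⟨hx1, hx2⟩ := Finset.mem_sdiff.1 hx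
    have hx3 : x ∈ bset w M j ∪ ((w.drop j).take k).toFinset := by
      have h4 : x ∈ gext M ((w.drop j).take k) (bset w M j) := by
        rw [← bset_add]; exact hx1
      exact gext_subset _ _ h4
    rcases Finset.mem_union.1 hx3 with h | h
    · exact absurd h hx2
    · exact h
  have hτ₂drop : bset w M (j+k) \ bset w M j ⊆ (w.drop j).toFinset := fun x hx =>
    List.mem_toFinset.2 (List.mem_of_mem_take (List.mem_toFinset.1 (hτ₂seg hx)))
  ext σ
  unfold linkC
  rw [Finset.mem_filter]
  constructor
  · rintro ⟨hσD, hdisj, hστ⟩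
    rw [mem_Dset] at hσD hστ
    rw [mem_Dset]
    have hnbc2 : σ ∪ bset w M (j+k) ∈ NBC w M := by
      rw [← hτ₂u, ← Finset.union_assoc]
      exact hστ.2
    refine ⟨?_, hnbc2⟩
    intro x hx
    have hxd : x ∈ (w.drop j).take k ∨ x ∈ w.drop (j+k) := by
      rw [← List.mem_append, ← drop_split w j k]
      exact List.mem_toFinset.1 (hσD.1 hx)
    rcases hxd with h | h
    · exfalso
      have hxτ₂ : x ∉ bset w M (j+k) \ bset w M j := Finset.disjoint_left.1 hdisj hx
      have hxb : x ∉ bset w M j := fun hc =>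
        take_drop_disjoint hw (hb.2.1 hc) (hσD.1 hx)
      have hxb2 : x ∉ bset w M (j+k) := fun hc =>
        hxτ₂ (Finset.mem_sdiff.2 ⟨hc, hxb⟩)
      have hxtake : x ∈ (w.take (j+k)).toFinset := by
        rw [List.mem_toFinset, take_add_split w j k]
        exact List.mem_append.2 (Or.inr h)
      refine hb2.2.2 x hxtake hxb2 ?_
      exact hS.2.2.1 _ (NBC_subset hnbc2) _
        (Finset.insert_subset (Finset.mem_union_left _ hx) Finset.subset_union_right)
    · exact List.mem_toFinset.2 h
  · intro hσ2
    rw [mem_Dset] at hσ2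
    obtain ⟨hσsub, hσnbc⟩ := hσ2
    have hσdropj : σ ⊆ (w.drop j).toFinset := by
      intro x hx
      rw [List.mem_toFinset, drop_split w j k]
      exact List.mem_append.2 (Or.inr (List.mem_toFinset.1 (hσsub hx)))
    have hdisj : Disjoint σ (bset w M (j+k) \ bset w M j) :=
      Finset.disjoint_left.2 (fun {x} hx hx2 => by
        have hdn : (w.drop j).Nodup := (List.drop_sublist ..).nodup hw
        have := (List.nodup_append.1 (drop_split w j k ▸ hdn)).2.2
        exact this _ (List.mem_toFinset.1 (hτ₂seg hx2)) _ (List.mem_toFinset.1 (hσsub hx)) rfl)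
    have hunion : (σ ∪ (bset w M (j+k) \ bset w M j)) ∪ bset w M j
        = σ ∪ bset w M (j+k) := by
      rw [Finset.union_assoc, hτ₂u]
    refine ⟨?_, hdisj, ?_⟩
    · rw [mem_Dset]
      exact ⟨hσdropj, NBC_down hS hσnbc
        (Finset.union_subset_union_right hbsub)⟩
    · rw [mem_Dset]
      refine ⟨Finset.union_subset hσdropj hτ₂drop, ?_⟩
      rw [hunion]
      exact hσnbc



lemma mem_bcComplex {w : List α} {I : Finset α} {M : Finset (Finset α)} {σ : Finset α} :
    σ ∈ bcComplex w I M ↔ σ ⊆ I ∧ ∀ B ⊆ σ, ¬ IsBrokenCircuit w I M B := by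
  unfold bcComplex
  rw [@Finset.mem_filter _ _ (Classical.decPred _), Finset.mem_powerset]


theorem master : ∀ n : ℕ, ∀ w : List α, w.Nodup → ∀ M : Finset (Finset α),
    IsMatroidComplex w.toFinset M → ∀ j : ℕ, (w.drop j).length = n →
    OrderDecomposable (w.drop j) (Dset w M j) := by
  intro n
  induction n using Nat.strong_induction_on with
  | _ n IHn =>
    intro w hw M hS j hlen
    refine OrderDecomposable.pure _ _ (pure_Dset hw hS j) ?_ ?_ ?_ ?_
    · intro k _ _
      rw [restrict_Dset hw hS j k]
      exact pure_Dset ((List.take_sublist _ _).nodup hw) (restrict_matroid hS (j+k)) j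
    · intro k _ _
      rw [contract_Dset hw hS j k]
      exact pure_Dset hw hS (j+k)
    · intro k hk hk2
      rw [restrict_Dset hw hS j k]
      have hk2' : k < n := hlen ▸ hk2
      have hlen2 : ((w.take (j+k)).drop j).length = k := by
        rw [List.length_drop, List.length_take]
        rw [List.length_drop] at hlen
        omega
      have hdt : (w.take (j+k)).drop j = (w.drop j).take k := by
        rw [List.drop_take, Nat.add_sub_cancel_left]
      have := IHn k hk2' (w.take (j+k))
        ((List.take_sublist _ _).nodup hw)
        (restrictC M (w.take (j+k)).toFinset) (restrict_matroid hS (j+k)) j hlen2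
      rwa [hdt] at this
    · intro k hk hk2
      rw [contract_Dset hw hS j k]
      have hdd : (w.drop j).drop k = w.drop (j+k) := by
        rw [List.drop_drop]
      have hk2' : k < n := hlen ▸ hk2
      have hlen3 : (w.drop (j+k)).length = n - k := by
        rw [List.length_drop] at hlen ⊢
        omega
      have := IHn (n - k) (by omega) w hw M hS (j+k) hlen3
      rwa [hdd]


lemma Dset_zero {w : List α} {M : Finset (Finset α)}
    (hS : IsMatroidComplex w.toFinset M) : Dset w M 0 = NBC w M := by
  ext σ
  rw [mem_Dset]
  have hb0 : bset w M 0 = ∅ := rfl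
  rw [hb0, Finset.union_empty]
  constructor
  · exact fun h => h.2
  · intro h
    exact ⟨hS.2.1 σ (NBC_subset h), h⟩


theorem od_empty : ∀ n : ℕ, ∀ w : List α, w.length = n →
    OrderDecomposable w (∅ : Finset (Finset α)) := by
  intro n
  induction n using Nat.strong_induction_on with
  | _ n IH =>
    intro w hlen
    have hres0 : ∀ A : Finset α, restrictC (∅ : Finset (Finset α)) A = ∅ :=
      fun A => Finset.filter_empty _
    have hcon0 : ∀ (ww : List α) (A : Finset α),
        contractC ww (∅ : Finset (Finset α)) A = ∅ := by
      intro ww A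
      unfold contractC linkC
      exact Finset.filter_empty _
    refine OrderDecomposable.pure _ _ ?_ ?_ ?_ ?_ ?_
    · intro σ τ hσ _
      exact absurd hσ.1 (Finset.notMem_empty σ)
    · intro k _ _
      rw [hres0]
      intro σ τ hσ _
      exact absurd hσ.1 (Finset.notMem_empty σ)
    · intro k _ _
      rw [hcon0]
      intro σ τ hσ _
      exact absurd hσ.1 (Finset.notMem_empty σ)
    · intro k hk hk2
      rw [hres0]
      exact IH k (by omega) (w.take k) (by rw [List.length_take]; omega)
    · intro k hk hk2
      rw [hcon0]
      exact IH (n - k) (by omega) (w.drop k) (by rw [List.length_drop]; omega)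


lemma bc_empty {w : List α} {M : Finset (Finset α)}
    (hS : IsMatroidComplex w.toFinset M) {a : α} (ha : a ∈ w.toFinset)
    (haM : {a} ∉ M) : bcComplex w w.toFinset M = ∅ := by
  rw [Finset.eq_empty_iff_forall_notMem]
  intro σ hσ
  refine (mem_bcComplex.1 hσ).2 ∅ (Finset.empty_subset σ) ?_
  refine ⟨{a}, a, ⟨Finset.singleton_subset_iff.2 ha, haM, fun D hD => ?_⟩,
    Finset.mem_singleton_self a, fun b hb => le_of_eq (by rw [Finset.mem_singleton.1 hb]),
    by simp⟩
  rw [Finset.ssubset_singleton_iff.1 hD]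
  exact empty_mem hS


lemma bc_eq_NBC {w : List α} {M : Finset (Finset α)} (hw : w.Nodup)
    (hS : IsMatroidComplex w.toFinset M)
    (hL : ∀ a ∈ w.toFinset, {a} ∈ M) : bcComplex w w.toFinset M = NBC w M := by
  ext σ
  rw [mem_bcComplex, mem_NBC]
  constructor
  · rintro ⟨hσI, hnb⟩
    have hσM : σ ∈ M := by
      by_contra hσM
      obtain ⟨C, hCσ, hC⟩ := exists_circuit hS hσI hσM
      have hCne : C.Nonempty := by
        rw [Finset.nonempty_iff_ne_empty]
        intro h
        exact hC.2.1 (h ▸ empty_mem hS)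
      obtain ⟨a, haC, hamin⟩ := C.exists_min_image w.idxOf hCne
      exact hnb (C.erase a) ((Finset.erase_subset a C).trans hCσ)
        ⟨C, a, hC, haC, hamin, rfl⟩
    refine ⟨hσM, fun c hc hcσ hcM => ?_⟩
    by_contra hX
    have hXI : insert c (σ.filter fun x => w.idxOf c < w.idxOf x) ⊆ w.toFinset :=
      Finset.insert_subset hc ((Finset.filter_subset _ _).trans hσI)
    obtain ⟨C, hCX, hC⟩ := exists_circuit hS hXI hX
    have hcC : c ∈ C := by
      by_contra hcC
      refine hC.2.1 (hS.2.2.1 σ hσM C ?_)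
      intro x hx
      rcases Finset.mem_insert.1 (hCX hx) with h | h
      · exact absurd (h ▸ hx) hcC
      · exact Finset.filter_subset _ _ h
    refine hnb (C.erase c) ?_ ⟨C, c, hC, hcC, ?_, rfl⟩
    · intro x hx
      have h2 := hCX (Finset.mem_of_mem_erase hx)
      rcases Finset.mem_insert.1 h2 with h | h
      · exact absurd h (Finset.ne_of_mem_erase hx)
      · exact Finset.filter_subset _ _ h
    · intro b hb
      rcases Finset.mem_insert.1 (hCX hb) with h | h
      · exact le_of_eq (by rw [h])
      · exact le_of_lt (Finset.mem_filter.1 h).2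
  · rintro ⟨hσM, hcond⟩
    refine ⟨hS.2.1 σ hσM, ?_⟩
    rintro B hBσ ⟨C, a, hC, haC, hamin, rfl⟩
    have haσ : a ∉ σ := by
      intro h
      refine hC.2.1 (hS.2.2.1 σ hσM C ?_)
      intro x hx
      by_cases hxa : x = a
      · exact hxa ▸ h
      · exact hBσ (Finset.mem_erase.2 ⟨hxa, hx⟩)
    have haI : a ∈ w.toFinset := hC.1 haC
    have h2 := hcond a haI haσ (hL a haI)
    refine hC.2.1 (hS.2.2.1 _ h2 C ?_)
    intro x hx
    by_cases hxa : x = a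
    · exact hxa ▸ Finset.mem_insert_self _ _
    · refine Finset.mem_insert_of_mem (Finset.mem_filter.2
        ⟨hBσ (Finset.mem_erase.2 ⟨hxa, hx⟩), ?_⟩)
      have hle := hamin x hx
      have hne : w.idxOf a ≠ w.idxOf x := fun h =>
        hxa (indexOf_inj' hw (List.mem_toFinset.1 (hC.1 hx))
          (List.mem_toFinset.1 haI) h.symm)
      omega


/-- For every matroid complex `Σ` on a finite set `I` and every linear order `w` on `I`, the
ordered complex `(w, BC_w(Σ))` is order-decomposable. -/
theorem orderDecomposable_of_brokenCircuitComplex (w : List α) (hw : w.Nodup)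
    (S : Finset (Finset α)) (hS : IsMatroidComplex w.toFinset S) :
    OrderDecomposable w (bcComplex w w.toFinset S) := by
  by_cases hL : ∀ a ∈ w.toFinset, {a} ∈ S
  · rw [bc_eq_NBC hw hS hL, ← Dset_zero hS]
    exact master (w.length) w hw S hS 0 (by simp)
  · push_neg at hL
    obtain ⟨a, ha, haM⟩ := hL
    rw [bc_empty hS ha haM]
    exact od_empty w.length w rfl



end OrderedComplexes
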